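/- Lower decomposition of the log-consistency: for every possibility function g ∈ F(Θ), CBO_low(g) = log Z_max − D_max(g ‖ g*_max), where the subtraction is taken in the extended reals (with real minus +∞ equal to −∞). -/
import Mathlib


open scoped ENNReal

/-- A possibility function on `Θ`: valued in `[0,1]` with supremum `1`. -/
def IsPossibility {Θ : Type*} (f : Θ → ℝ) : Prop :=
  (∀ θ, 0 ≤ f θ) ∧ (∀ θ, f θ ≤ 1) ∧ (⨆ θ, f θ) = 1

/-- Extended logarithm of the quotient `g θ / π θ`, computed in `[0,∞]` with the
conventions `0/0 = 0` and `a/0 = ∞` for `a > 0`, and `log 0 = -∞`, `log ∞ = ∞`. -/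
noncomputable def ratioLog {Θ : Type*} (g π : Θ → ℝ) (θ : Θ) : EReal :=
  ENNReal.log (ENNReal.ofReal (g θ) / ENNReal.ofReal (π θ))

/-- The lower consistency bound `CBO_low(g) = inf_θ { -ℓ(θ) - log(g(θ)/π(θ)) }`. -/
noncomputable def CBOlow {Θ : Type*} (ℓ π g : Θ → ℝ) : EReal :=
  ⨅ θ, ((-ℓ θ : ℝ) : EReal) - ratioLog g π θ

/-- The upper consistency bound `CBO_up(g) = sup_θ { -ℓ(θ) - log(g(θ)/π(θ)) }`. -/
noncomputable def CBOup {Θ : Type*} (ℓ π g : Θ → ℝ) : EReal :=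
  ⨆ θ, ((-ℓ θ : ℝ) : EReal) - ratioLog g π θ

/-- The maxitive marginal likelihood `Z_max = sup_θ exp(-ℓ(θ)) π(θ)`. -/
noncomputable def Zmax {Θ : Type*} (ℓ π : Θ → ℝ) : ℝ :=
  ⨆ θ, Real.exp (-ℓ θ) * π θ

/-- The maxitive posterior `g*_max(θ) = exp(-ℓ(θ)) π(θ) / Z_max`. -/
noncomputable def gstar {Θ : Type*} (ℓ π : Θ → ℝ) (θ : Θ) : ℝ :=
  Real.exp (-ℓ θ) * π θ / Zmax ℓ π

/-- The max-relative entropy `D_max(g ‖ f) = sup_θ log(g(θ)/f(θ))`. -/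
noncomputable def Dmax {Θ : Type*} (g f : Θ → ℝ) : EReal :=
  ⨆ θ, ratioLog g f θ


lemma ereal_const_sub_sub (c : ℝ) (x : EReal) : (c : EReal) - ((c : EReal) - x) = x := by
  induction x using EReal.rec with
  | bot => simp [EReal.coe_sub_bot, EReal.sub_top]
  | coe x => rw [← EReal.coe_sub, ← EReal.coe_sub]; norm_num
  | top => simp [EReal.sub_top, EReal.coe_sub_bot, EReal.sub_bot]

lemma ereal_iInf_const_sub {Θ : Type*} [Nonempty Θ] (c : ℝ) (f : Θ → EReal) :
    ⨅ θ, (c : EReal) - f θ = (c : EReal) - ⨆ θ, f θ := by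
  apply le_antisymm
  · have h1 : ∀ θ, f θ ≤ (c : EReal) - ⨅ θ', ((c : EReal) - f θ') := by
      intro θ
      calc f θ = (c : EReal) - ((c : EReal) - f θ) := (ereal_const_sub_sub c _).symm
        _ ≤ _ := EReal.sub_le_sub le_rfl (iInf_le _ θ)
    have h2 : (⨆ θ, f θ) ≤ (c : EReal) - ⨅ θ', ((c : EReal) - f θ') := iSup_le h1
    calc ⨅ θ, (c : EReal) - f θ
        = (c : EReal) - ((c : EReal) - ⨅ θ', ((c : EReal) - f θ')) :=
          (ereal_const_sub_sub c _).symm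
      _ ≤ (c : EReal) - ⨆ θ, f θ := EReal.sub_le_sub le_rfl h2
  · exact le_iInf fun θ => EReal.sub_le_sub le_rfl (le_iSup f θ)

lemma Zmax_pos {Θ : Type*} [Nonempty Θ] (ℓ π : Θ → ℝ)
    (hπ : IsPossibility π) (hℓ : ∀ θ, 0 ≤ ℓ θ) : 0 < Zmax ℓ π := by
  obtain ⟨hπ0, hπ1, hπs⟩ := hπ
  have hbdd : BddAbove (Set.range fun θ => Real.exp (-ℓ θ) * π θ) := by
    refine ⟨1, ?_⟩
    rintro x ⟨θ, rfl⟩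
    exact mul_le_one₀ (Real.exp_le_one_iff.2 (neg_nonpos.2 (hℓ θ))) (hπ0 θ) (hπ1 θ)
  obtain ⟨θ0, hθ0⟩ : ∃ θ, 0 < π θ := by
    by_contra h
    push_neg at h
    have : ∀ θ, π θ = 0 := fun θ => le_antisymm (h θ) (hπ0 θ)
    simp only [this, ciSup_const] at hπs
    norm_num at hπs
  have : 0 < Real.exp (-ℓ θ0) * π θ0 := mul_pos (Real.exp_pos _) hθ0
  exact this.trans_le (le_ciSup hbdd θ0)

/-- Lower decomposition of the log-consistency:
`CBO_low(g) = log Z_max − D_max(g ‖ g*_max)` for every possibility function `g`,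
the subtraction being taken in the extended reals. -/
theorem CBOlow_decomposition {Θ : Type*} [Nonempty Θ] (π ℓ g : Θ → ℝ)
    (hπ : IsPossibility π) (hℓ : ∀ θ, 0 ≤ ℓ θ) (hg : IsPossibility g) :
    CBOlow ℓ π g = ((Real.log (Zmax ℓ π) : ℝ) : EReal) - Dmax g (gstar ℓ π) := by
  obtain ⟨hπ0, hπ1, hπs⟩ := hπ
  obtain ⟨hg0, hg1, hgs⟩ := hg
  have hZ : 0 < Zmax ℓ π := Zmax_pos ℓ π ⟨hπ0, hπ1, hπs⟩ hℓ
  have key : ∀ θ, ((-ℓ θ : ℝ) : EReal) - ratioLog g π θ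
      = ((Real.log (Zmax ℓ π) : ℝ) : EReal) - ratioLog g (gstar ℓ π) θ := by
    intro θ
    by_cases hπθ : π θ = 0
    · have hgsθ : gstar ℓ π θ = 0 := by simp [gstar, hπθ]
      by_cases hgθ : g θ = 0
      · simp [ratioLog, hπθ, hgθ, hgsθ, EReal.coe_sub_bot, EReal.sub_bot]
      · have hgpos : 0 < g θ := (hg0 θ).lt_of_ne (Ne.symm hgθ)
        have hne : ENNReal.ofReal (g θ) ≠ 0 := by
          simp [ENNReal.ofReal_eq_zero, not_le, hgpos]
        simp [ratioLog, hπθ, hgsθ, ENNReal.div_zero hne, EReal.sub_top]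
    · have hπpos : 0 < π θ := (hπ0 θ).lt_of_ne (Ne.symm hπθ)
      have hgspos : 0 < gstar ℓ π θ :=
        div_pos (mul_pos (Real.exp_pos _) hπpos) hZ
      by_cases hgθ : g θ = 0
      · simp [ratioLog, hgθ, EReal.coe_sub_bot, EReal.sub_bot]
      · have hgpos : 0 < g θ := (hg0 θ).lt_of_ne (Ne.symm hgθ)
        have r1 : ratioLog g π θ = ((Real.log (g θ / π θ) : ℝ) : EReal) := by
          rw [ratioLog, ← ENNReal.ofReal_div_of_pos hπpos,
            ENNReal.log_ofReal_of_pos (div_pos hgpos hπpos)]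
        have r2 : ratioLog g (gstar ℓ π) θ
            = ((Real.log (g θ / gstar ℓ π θ) : ℝ) : EReal) := by
          rw [ratioLog, ← ENNReal.ofReal_div_of_pos hgspos,
            ENNReal.log_ofReal_of_pos (div_pos hgpos hgspos)]
        rw [r1, r2, ← EReal.coe_sub, ← EReal.coe_sub, EReal.coe_eq_coe_iff]
        rw [Real.log_div hgθ hπpos.ne', Real.log_div hgθ hgspos.ne',
          gstar, Real.log_div (mul_pos (Real.exp_pos _) hπpos).ne' hZ.ne',
          Real.log_mul (Real.exp_pos _).ne' hπpos.ne', Real.log_exp]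
        ring
  rw [CBOlow]
  simp_rw [key]
  rw [Dmax, ereal_iInf_const_sub]
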